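/- Let μ and ν be probability measures on a measurable space Y with μ ≪ ν, let α ∈ (0,1), and let β ∈ ℝ and n ∈ ℕ. Then μ^{⊗n}( { y ∈ Y^n : Σ_{k=1}^n log (dμ/dν)(y_k) ≤ nβ } ) ≤ exp( −(1−α)·n·(D_α(μ‖ν) − β) ). -/

import Mathlib

open MeasureTheory ProbabilityTheory ENNReal Filter

noncomputable section
open scoped Classical

/-- Kullback–Leibler divergence `D(μ‖ν) = ∫ log (dμ/dν) dμ`, valued in `[0,∞]`
(`∞` when the log-density is not integrable). -/
def KLdiv {Y : Type*} [MeasurableSpace Y] (μ ν : Measure Y) : ℝ≥0∞ :=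
  if Integrable (fun y => Real.log (μ.rnDeriv ν y).toReal) μ then
    ENNReal.ofReal (∫ y, Real.log (μ.rnDeriv ν y).toReal ∂μ)
  else ∞

/-- Rényi divergence `D_α(μ‖ν) = (α-1)⁻¹ log ∫ (dμ/dν)^α dν`, valued in `[0,∞]`,
`∞` when the integral is infinite (α>1) or zero (α<1). -/
def RenyiDiv {Y : Type*} [MeasurableSpace Y] (α : ℝ) (μ ν : Measure Y) : ℝ≥0∞ :=
  if (1 < α ∧ ∫⁻ y, μ.rnDeriv ν y ^ α ∂ν = ∞) ∨ (α < 1 ∧ ∫⁻ y, μ.rnDeriv ν y ^ α ∂ν = 0) then ∞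
  else ENNReal.ofReal ((α - 1)⁻¹ * Real.log (∫⁻ y, μ.rnDeriv ν y ^ α ∂ν).toReal)

/-- Output marginal `Q_{P,W} = ∫ W(x,·) dP(x)`. -/
def outputM {X Y : Type*} [MeasurableSpace X] [MeasurableSpace Y]
    (P : Measure X) (W : Kernel X Y) : Measure Y := P.bind (fun x => W x)

/-- Mutual information `I(P,W) = D(P ⊗ W ‖ P × Q_{P,W})`. -/
def mutInfo {X Y : Type*} [MeasurableSpace X] [MeasurableSpace Y]
    (P : Measure X) (W : Kernel X Y) : ℝ≥0∞ :=
  KLdiv (P.compProd W) (P.prod (outputM P W))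

/-- The defining property of a `(δ,J)`-approximating family `V` of the compound
channel `(W s)_{s ∈ S}` under input distribution `P`. -/
def ApproxFam {X Y S : Type*} [MeasurableSpace X] [MeasurableSpace Y]
    (P : Measure X) (W : S → Kernel X Y) (δ : ℝ) {J : ℕ} (V : Fin J → Kernel X Y) : Prop :=
  (∀ s : S, ∃ j : Fin J,
      (∫⁻ x, KLdiv (W s x) (V j x) ∂P) ≤ ENNReal.ofReal δ ∧
      (∃ α : ℝ, 1 < α ∧ ∀ x : X, RenyiDiv α (W s x) (V j x) < ∞) ∧
      mutInfo P (V j) - mutInfo P (W s) ≤ ENNReal.ofReal δ) ∧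
  (∀ j : Fin J, ∃ s : S, mutInfo P (W s) - mutInfo P (V j) ≤ ENNReal.ofReal δ)

/-- The compound channel `(W s)_{s ∈ S}` can be `(δ,J)`-approximated under `P`. -/
def CanApprox {X Y S : Type*} [MeasurableSpace X] [MeasurableSpace Y]
    (P : Measure X) (W : S → Kernel X Y) (δ : ℝ) (J : ℕ) : Prop :=
  ∃ V : Fin J → Kernel X Y, (∀ j, IsMarkovKernel (V j)) ∧ ApproxFam P W δ V

/-- The `(P,n,R)`-ensemble of random codebooks: `M` codewords drawn i.i.d. from `P^⊗n`. -/
def ensemble {X : Type*} [MeasurableSpace X] (P : Measure X) (n M : ℕ) :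
    Measure (Fin M → Fin n → X) :=
  Measure.pi (fun _ => Measure.pi (fun _ => P))

/-- The cost-constrained codebook: codewords violating `∑ c ≤ n C` are replaced by `(x₀,…,x₀)`. -/
def constrainCB {X : Type*} (c : X → ℝ) (Cmax : ℝ) (x₀ : X) {n M : ℕ}
    (cb : Fin M → Fin n → X) : Fin M → Fin n → X :=
  fun m => if ∑ j, c (cb m j) ≤ n * Cmax then cb m else fun _ => x₀

/-- Total variation norm `‖μ - ν‖` of the difference of two (finite) measures,
via the Jordan decomposition (`Measure.sub` is the positive part). -/
def tvDist {Z : Type*} [MeasurableSpace Z] (μ ν : Measure Z) : ℝ≥0∞ :=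
  (μ - ν) Set.univ + (ν - μ) Set.univ
lemma lintegral_pi_prod_aux {Y : Type*} [MeasurableSpace Y] (μ : Measure Y)
    [SigmaFinite μ] (g : Y → ℝ≥0∞) (hg : Measurable g) (n : ℕ) :
    ∫⁻ y : Fin n → Y, ∏ i, g (y i) ∂(Measure.pi fun _ => μ) = (∫⁻ y, g y ∂μ) ^ n := by
  induction n with
  | zero => simp [Measure.pi_univ]
  | succ n ih =>
    have pres := (measurePreserving_piFinSuccAbove (fun _ : Fin (n+1) => μ) 0).symm
    have hmeas : Measurable fun y : Fin (n+1) → Y => ∏ i, g (y i) :=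
      Finset.measurable_prod _ fun i _ => hg.comp (measurable_pi_apply i)
    rw [← pres.lintegral_comp hmeas]
    have key : ∀ p : Y × (Fin n → Y),
        (∏ i, g (((MeasurableEquiv.piFinSuccAbove (fun _ : Fin (n+1) => Y) 0).symm p) i))
          = g p.1 * ∏ j, g (p.2 j) := by
      intro p
      simp [MeasurableEquiv.piFinSuccAbove_symm_apply, Fin.insertNthEquiv,
        Fin.prod_univ_succ, Fin.insertNth_zero, Fin.zero_succAbove]
    simp_rw [key]
    rw [lintegral_prod_mul (f := g) (g := fun y : Fin n → Y => ∏ j, g (y j)) hg.aemeasurable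
      ((Finset.measurable_prod _ fun j _ => hg.comp (measurable_pi_apply j)).aemeasurable), ih,
      pow_succ, mul_comm]

theorem renyi_chernoff_bound_lower
    {Y : Type*} [MeasurableSpace Y]
    (μ ν : Measure Y) [IsProbabilityMeasure μ] [IsProbabilityMeasure ν] (hac : μ ≪ ν)
    (α : ℝ) (hα0 : 0 < α) (hα1 : α < 1) (β : ℝ) (n : ℕ) :
    (Measure.pi fun _ : Fin n => μ)
        {y | ∑ k, Real.log (μ.rnDeriv ν (y k)).toReal ≤ (n : ℝ) * β}
      ≤ ENNReal.ofReal
          (Real.exp (-((1 - α) * n * ((RenyiDiv α μ ν).toReal - β)))) := by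
  classical
  set f := μ.rnDeriv ν with hfdef
  have hfm : Measurable f := Measure.measurable_rnDeriv μ ν
  have hfam : Measurable fun y => f y ^ α := hfm.pow_const α
  set Z : ℝ≥0∞ := ∫⁻ y, f y ^ α ∂ν with hZdef
  have hintf : ∫⁻ y, f y ∂ν = 1 := by
    rw [Measure.lintegral_rnDeriv hac]; exact measure_univ
  -- Z ≠ 0
  have hZ0 : Z ≠ 0 := by
    intro h
    have hf0 : f =ᵐ[ν] 0 :=
      ENNReal.ae_eq_zero_of_lintegral_rpow_eq_zero hα0.le hfm.aemeasurable h
    have : (1 : ℝ≥0∞) = 0 := by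
      rw [← hintf, lintegral_congr_ae hf0]
      simp
    simp at this
  -- Z ≤ 1 by Hölder
  have hZ1 : Z ≤ 1 := by
    have hα1' : (0:ℝ) < 1 - α := by linarith
    have hpq : Real.HolderConjugate (1/α) (1/(1-α)) := by
      rw [Real.holderConjugate_iff]
      constructor
      · rw [lt_div_iff₀ hα0]; linarith
      · field_simp; ring
    have H := ENNReal.lintegral_mul_le_Lp_mul_Lq ν hpq
      (f := fun y => f y ^ α) (g := fun _ => 1) hfam.aemeasurable aemeasurable_const
    simp only [Pi.mul_apply, mul_one, one_rpow] at H
    calc Z = ∫⁻ y, (fun y => f y ^ α) y * 1 ∂ν := by simp [hZdef]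
      _ ≤ (∫⁻ y, (f y ^ α) ^ (1/α) ∂ν) ^ (1/(1/α)) *
          (∫⁻ _, (1:ℝ≥0∞) ∂ν) ^ (1/(1/(1-α))) := by
        simpa [one_div] using H
      _ = 1 := by
        have : ∀ y, (f y ^ α) ^ (1/α) = f y := by
          intro y
          rw [← ENNReal.rpow_mul, mul_one_div, div_self hα0.ne', ENNReal.rpow_one]
        simp_rw [this]
        rw [hintf]
        simp
  have hZtop : Z ≠ ∞ := (hZ1.trans_lt one_lt_top).ne
  have hZr : 0 < Z.toReal := ENNReal.toReal_pos hZ0 hZtop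
  have hZr1 : Z.toReal ≤ 1 := by
    have := ENNReal.toReal_mono one_ne_top hZ1
    simpa using this
  have hα1ne : α - 1 ≠ 0 := by intro h; linarith [hα1]
  -- RenyiDiv value
  have hR : (RenyiDiv α μ ν).toReal = (α - 1)⁻¹ * Real.log Z.toReal := by
    rw [RenyiDiv, if_neg, ENNReal.toReal_ofReal]
    · have h1 : (α - 1)⁻¹ ≤ 0 := inv_nonpos.2 (by linarith)
      have h2 : Real.log Z.toReal ≤ 0 := Real.log_nonpos hZr.le hZr1
      nlinarith
    · rintro (⟨h, _⟩ | ⟨_, h⟩)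
      · linarith
      · exact hZ0 h
  -- RHS rewrite
  have hRHS : ENNReal.ofReal (Real.exp (-((1 - α) * n * ((RenyiDiv α μ ν).toReal - β))))
      = ENNReal.ofReal (Real.exp ((1-α) * (n*β))) * Z ^ n := by
    rw [hR]
    have hexp : -((1 - α) * n * ((α - 1)⁻¹ * Real.log Z.toReal - β))
        = (1-α) * (n*β) + n * Real.log Z.toReal := by
      have h1 : (1-α) * (α-1)⁻¹ = -1 := by
        rw [show (1-α) = -(α-1) by ring, neg_mul, mul_inv_cancel₀ hα1ne]
      field_simp
      ring
    rw [hexp, Real.exp_add, ENNReal.ofReal_mul (Real.exp_nonneg _)]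
    congr 1
    rw [Real.exp_nat_mul, Real.exp_log hZr, ENNReal.ofReal_pow hZr.le,
      ENNReal.ofReal_toReal hZtop]
  -- the per-coordinate weight
  set g : Y → ℝ≥0∞ := fun y => ENNReal.ofReal (Real.exp ((α-1) * Real.log (f y).toReal))
    with hgdef
  have hgm : Measurable g :=
    (Real.measurable_exp.comp ((Real.measurable_log.comp hfm.ennreal_toReal).const_mul
      (α-1))).ennreal_ofReal
  have hgZ : ∫⁻ y, g y ∂μ = Z := by
    rw [← MeasureTheory.lintegral_rnDeriv_mul hac hgm.aemeasurable]
    refine lintegral_congr_ae ?_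
    filter_upwards [Measure.rnDeriv_lt_top μ ν] with y hy
    show f y * g y = f y ^ α
    rcases eq_or_ne (f y) 0 with h0 | h0
    · simp [hgdef, h0, ENNReal.zero_rpow_of_pos hα0]
    · have ht : 0 < (f y).toReal := ENNReal.toReal_pos h0 hy.ne
      have hgy : g y = f y ^ (α - 1) := by
        rw [hgdef]
        simp only
        rw [mul_comm, ← Real.rpow_def_of_pos ht, ← ENNReal.ofReal_rpow_of_pos ht,
          ENNReal.ofReal_toReal hy.ne]
      rw [hgy]
      calc f y * f y ^ (α - 1) = f y ^ (1:ℝ) * f y ^ (α - 1) := by rw [ENNReal.rpow_one]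
        _ = f y ^ (1 + (α - 1)) := (ENNReal.rpow_add _ _ h0 hy.ne).symm
        _ = f y ^ α := by norm_num
  -- measurability of S
  set S : (Fin n → Y) → ℝ := fun y => ∑ k, Real.log (f (y k)).toReal with hSdef
  have hSm : Measurable S :=
    Finset.measurable_sum _ fun k _ =>
      (Real.measurable_log.comp hfm.ennreal_toReal).comp (measurable_pi_apply k)
  have hFm : Measurable fun y : Fin n → Y =>
      ENNReal.ofReal (Real.exp ((α-1) * (S y - n*β))) :=
    (Real.measurable_exp.comp (((hSm.sub measurable_const)).const_mul (α-1))).ennreal_ofReal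
  have hptwise : ∀ y : Fin n → Y,
      ENNReal.ofReal (Real.exp ((α-1) * (S y - n*β)))
        = ENNReal.ofReal (Real.exp ((1-α) * (n*β))) * ∏ k, g (y k) := by
    intro y
    have hsplit : (α-1) * (S y - n*β) = (1-α) * (n*β) + ∑ k, (α-1) * Real.log (f (y k)).toReal := by
      rw [hSdef]
      simp only
      rw [← Finset.mul_sum]
      ring
    rw [hsplit, Real.exp_add, Real.exp_sum, ENNReal.ofReal_mul (Real.exp_nonneg _),
      ENNReal.ofReal_prod_of_nonneg (fun k _ => Real.exp_nonneg _)]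
  calc (Measure.pi fun _ : Fin n => μ) {y | ∑ k, Real.log (f (y k)).toReal ≤ (n : ℝ) * β}
      = ∫⁻ y in {y | S y ≤ (n : ℝ) * β}, 1 ∂(Measure.pi fun _ : Fin n => μ) :=
        (setLIntegral_one _).symm
    _ ≤ ∫⁻ y in {y | S y ≤ (n : ℝ) * β},
          ENNReal.ofReal (Real.exp ((α-1) * (S y - n*β))) ∂(Measure.pi fun _ : Fin n => μ) := by
        refine setLIntegral_mono hFm fun y hy => ?_
        rw [ENNReal.one_le_ofReal]
        have h1 : α - 1 ≤ 0 := by linarith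
        have h2 : S y - n*β ≤ 0 := sub_nonpos.2 hy
        exact Real.one_le_exp (by nlinarith)
    _ ≤ ∫⁻ y, ENNReal.ofReal (Real.exp ((α-1) * (S y - n*β))) ∂(Measure.pi fun _ : Fin n => μ) :=
        setLIntegral_le_lintegral _ _
    _ = ENNReal.ofReal (Real.exp ((1-α) * (n*β))) * Z ^ n := by
        simp_rw [hptwise]
        rw [lintegral_const_mul (f := fun y : Fin n → Y => ∏ k, g (y k)) _
          (Finset.measurable_prod _ fun k _ => hgm.comp (measurable_pi_apply k)),
          lintegral_pi_prod_aux μ g hgm n, hgZ]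
    _ = ENNReal.ofReal (Real.exp (-((1 - α) * n * ((RenyiDiv α μ ν).toReal - β)))) := by
        rw [hRHS]
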